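/- Let (R(t))_{t>0} be a strongly continuous family of bounded linear operators on X with ∫_0^∞ ‖R(v)‖ dv < ∞. Suppose that lim_{T→+∞} (∫_{-T}^{T} ρ₂(t) dt) / (∫_{-T}^{T} ρ₁(t) dt) = 0 and that q ∈ B^1WPAA_0(ℝ, X, ρ₁, ρ₂) is essentially bounded. Then the function Q(t) := ∫_{-∞}^{t} R(t−s) q(s) ds belongs to B^1WPAA_0(ℝ, X, ρ₁, ρ₂). -/

import Mathlib

open MeasureTheory Filter Set

/-- A weight of class `U_∞`: locally integrable, a.e. positive, and
`∫_{-T}^{T} ρ(t) dt → ∞` as `T → +∞`. -/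
def IsWeightUInfty (ρ : ℝ → ℝ) : Prop :=
  (∀ a b : ℝ, IntervalIntegrable ρ MeasureTheory.volume a b) ∧
  (∀ᵐ t : ℝ ∂MeasureTheory.volume, 0 < ρ t) ∧
  Filter.Tendsto (fun T : ℝ => ∫ t in (-T)..T, ρ t) Filter.atTop Filter.atTop

/-- Membership in `B^1WPAA_0(ℝ, X, ρ₁, ρ₂)`. -/
def MemB1WPAA0 {X : Type*} [NormedAddCommGroup X] (ρ₁ ρ₂ : ℝ → ℝ) (q : ℝ → X) : Prop :=
  Filter.Tendsto (fun T : ℝ =>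
      (1 / (2 * ∫ t in (-T)..T, ρ₁ t)) *
        ∫ t in (-T)..T,
          (Filter.limsup (fun l : ℝ =>
            (1 / (2 * l)) * ∫ s in (t - l)..(t + l), ‖q s‖) Filter.atTop) * ρ₂ t)
    Filter.atTop (nhds 0)

/-- If `(R(t))_{t>0}` is a strongly continuous operator family with
`∫_0^∞ ‖R(v)‖ dv < ∞`, `∫_{-T}^{T} ρ₂ / ∫_{-T}^{T} ρ₁ → 0` and
`u ∈ B^1WPAA_0(ℝ, X, ρ₁, ρ₂)` is essentially bounded, then
`Q(t) := ∫_{-∞}^t R(t-s) u(s) ds` belongs to `B^1WPAA_0(ℝ, X, ρ₁, ρ₂)`. -/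
theorem infinite_convolution_B1WPAA0
    {X : Type*} [NormedAddCommGroup X] [NormedSpace ℂ X] [CompleteSpace X]
    (ρ₁ ρ₂ : ℝ → ℝ) (hρ₁ : IsWeightUInfty ρ₁) (hρ₂ : IsWeightUInfty ρ₂)
    (R : ℝ → X →L[ℂ] X)
    (hRcont : ∀ x : X, ContinuousOn (fun t : ℝ => R t x) (Set.Ioi 0))
    (hR : IntegrableOn (fun v : ℝ => ‖R v‖) (Set.Ioi 0) volume)
    (hweights : Filter.Tendsto (fun T : ℝ =>
        (∫ t in (-T)..T, ρ₂ t) / ∫ t in (-T)..T, ρ₁ t) Filter.atTop (nhds 0))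
    (u : ℝ → X) (hu : MemB1WPAA0 ρ₁ ρ₂ u)
    (humeas : AEStronglyMeasurable u volume)
    (hubdd : ∃ C : ℝ, ∀ᵐ t : ℝ ∂volume, ‖u t‖ ≤ C)
    (Q : ℝ → X) (hQ : ∀ t : ℝ, Q t = ∫ s in Set.Iio t, R (t - s) (u s)) :
    MemB1WPAA0 ρ₁ ρ₂ Q := by
  classical
  obtain ⟨C₀, hC₀⟩ := hubdd
  set C := max C₀ 0 with hCdef
  have hC : ∀ᵐ t : ℝ ∂volume, ‖u t‖ ≤ C := hC₀.mono fun t h => h.trans (le_max_left _ _)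
  have hC0 : (0:ℝ) ≤ C := le_max_right _ _
  set g : ℝ → ℝ := Set.indicator (Set.Ioi 0) (fun v => ‖R v‖) with hgdef
  have hgint : Integrable g volume := by
    rw [hgdef, MeasureTheory.integrable_indicator_iff measurableSet_Ioi]
    exact hR
  have hg0 : ∀ v, 0 ≤ g v := fun v => Set.indicator_nonneg (fun v _ => norm_nonneg _) v
  set M : ℝ := C * ∫ v, g v with hMdef
  have hM0 : 0 ≤ M := mul_nonneg hC0 (integral_nonneg hg0)
  -- pointwise bound on Q
  have hQb : ∀ t, ‖Q t‖ ≤ M := by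
    intro t
    rw [hQ t]
    have hgc : Integrable (fun s => C * g (t - s)) volume :=
      ((integrable_comp_sub_left g t).mpr hgint).const_mul C
    have hbound : ∀ᵐ s ∂(volume.restrict (Set.Iio t)), ‖R (t - s) (u s)‖ ≤ C * g (t - s) := by
      filter_upwards [ae_restrict_mem measurableSet_Iio, ae_restrict_of_ae hC] with s hs hCs
      have h1 : t - s ∈ Set.Ioi (0:ℝ) := by
        simp only [Set.mem_Iio] at hs
        simp only [Set.mem_Ioi]; linarith
      have hg1 : g (t - s) = ‖R (t - s)‖ := Set.indicator_of_mem h1 _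
      rw [hg1]
      calc ‖R (t - s) (u s)‖ ≤ ‖R (t - s)‖ * ‖u s‖ := (R (t - s)).le_opNorm _
        _ ≤ ‖R (t - s)‖ * C := mul_le_mul_of_nonneg_left hCs (norm_nonneg _)
        _ = C * ‖R (t - s)‖ := mul_comm _ _
    calc ‖∫ s in Set.Iio t, R (t - s) (u s)‖ ≤ ∫ s in Set.Iio t, C * g (t - s) :=
        MeasureTheory.norm_integral_le_of_norm_le hgc.restrict hbound
      _ ≤ ∫ s, C * g (t - s) := setIntegral_le_integral hgc
          (Eventually.of_forall fun s => mul_nonneg hC0 (hg0 _))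
      _ = C * ∫ s, g (t - s) := MeasureTheory.integral_const_mul C _
      _ = C * ∫ v, g v := by rw [integral_sub_left_eq_self g volume t]
      _ = M := rfl
  -- limsup bounds
  set L : ℝ → ℝ := fun t => Filter.limsup (fun l : ℝ =>
      (1 / (2 * l)) * ∫ s in (t - l)..(t + l), ‖Q s‖) Filter.atTop with hLdef
  have hbounds : ∀ t l : ℝ, 0 < l →
      0 ≤ (1 / (2 * l)) * ∫ s in (t - l)..(t + l), ‖Q s‖ ∧
      (1 / (2 * l)) * ∫ s in (t - l)..(t + l), ‖Q s‖ ≤ M := by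
    intro t l hl
    have hab : t - l ≤ t + l := by linarith
    have hpos : (0:ℝ) < 1 / (2 * l) := by positivity
    constructor
    · exact mul_nonneg hpos.le (intervalIntegral.integral_nonneg hab fun s _ => norm_nonneg _)
    · have h1 : ∫ s in (t - l)..(t + l), ‖Q s‖ ≤ M * (2 * l) := by
        rw [intervalIntegral.integral_of_le hab]
        have hvol : volume (Set.Ioc (t - l) (t + l)) < ⊤ := by
          rw [Real.volume_Ioc]; exact ENNReal.ofReal_lt_top
        have hst := MeasureTheory.norm_setIntegral_le_of_norm_le_const_ae' (μ := volume)
          (s := Set.Ioc (t - l) (t + l)) (f := fun s => ‖Q s‖) (C := M) hvol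
          (Eventually.of_forall fun s _ => by
            rw [Real.norm_of_nonneg (norm_nonneg _)]; exact hQb s)
        have hle : ∫ s in Set.Ioc (t - l) (t + l), ‖Q s‖ ≤
            M * (volume (Set.Ioc (t - l) (t + l))).toReal :=
          le_trans (le_abs_self _) hst
        have : (volume (Set.Ioc (t - l) (t + l))).toReal = 2 * l := by
          rw [Real.volume_Ioc, ENNReal.toReal_ofReal (by linarith)]; ring
        rwa [this] at hle
      calc (1 / (2 * l)) * ∫ s in (t - l)..(t + l), ‖Q s‖
          ≤ (1 / (2 * l)) * (M * (2 * l)) := mul_le_mul_of_nonneg_left h1 hpos.le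
        _ = M := by field_simp
  have hL : ∀ t, 0 ≤ L t ∧ L t ≤ M := by
    intro t
    have hub : ∀ᶠ l in Filter.atTop, (fun l : ℝ =>
        (1 / (2 * l)) * ∫ s in (t - l)..(t + l), ‖Q s‖) l ≤ M :=
      (Filter.eventually_gt_atTop 0).mono fun l hl => (hbounds t l hl).2
    have hlb : ∀ᶠ l in Filter.atTop, (0:ℝ) ≤ (fun l : ℝ =>
        (1 / (2 * l)) * ∫ s in (t - l)..(t + l), ‖Q s‖) l :=
      (Filter.eventually_gt_atTop 0).mono fun l hl => (hbounds t l hl).1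
    have hbdd : Filter.IsBoundedUnder (· ≤ ·) Filter.atTop (fun l : ℝ =>
        (1 / (2 * l)) * ∫ s in (t - l)..(t + l), ‖Q s‖) :=
      Filter.isBoundedUnder_of_eventually_le hub
    have hcb : Filter.IsCoboundedUnder (· ≤ ·) Filter.atTop (fun l : ℝ =>
        (1 / (2 * l)) * ∫ s in (t - l)..(t + l), ‖Q s‖) :=
      Filter.isCoboundedUnder_le_of_eventually_le Filter.atTop hlb
    exact ⟨Filter.le_limsup_of_frequently_le hlb.frequently hbdd,
      Filter.limsup_le_of_le hcb hub⟩
  -- main squeeze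
  have hA₁ := hρ₁.2.2
  apply squeeze_zero' (g := fun T : ℝ => (M / 2) * ((∫ t in (-T)..T, ρ₂ t) / ∫ t in (-T)..T, ρ₁ t))
  · filter_upwards [hA₁.eventually_ge_atTop 1, Filter.eventually_ge_atTop (0:ℝ)] with T hT1 hT0
    have hab : -T ≤ T := by linarith
    have hI : 0 ≤ ∫ t in (-T)..T, L t * ρ₂ t :=
      intervalIntegral.integral_nonneg_of_ae hab
        (hρ₂.2.1.mono fun t ht => mul_nonneg (hL t).1 ht.le)
    have hinv : (0:ℝ) ≤ 1 / (2 * ∫ t in (-T)..T, ρ₁ t) := by positivity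
    exact mul_nonneg hinv hI
  · filter_upwards [hA₁.eventually_ge_atTop 1, Filter.eventually_ge_atTop (0:ℝ)] with T hT1 hT0
    have hab : -T ≤ T := by linarith
    have hA₂0 : 0 ≤ ∫ t in (-T)..T, ρ₂ t :=
      intervalIntegral.integral_nonneg_of_ae hab (hρ₂.2.1.mono fun t ht => ht.le)
    have hIle : ∫ t in (-T)..T, L t * ρ₂ t ≤ M * ∫ t in (-T)..T, ρ₂ t := by
      by_cases hInt : IntervalIntegrable (fun t => L t * ρ₂ t) volume (-T) T
      · have hle : (fun t => L t * ρ₂ t) ≤ᵐ[volume] fun t => M * ρ₂ t :=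
          hρ₂.2.1.mono fun t ht => mul_le_mul_of_nonneg_right (hL t).2 ht.le
        calc ∫ t in (-T)..T, L t * ρ₂ t ≤ ∫ t in (-T)..T, M * ρ₂ t :=
            intervalIntegral.integral_mono_ae hab hInt ((hρ₂.1 (-T) T).const_mul M) hle
          _ = M * ∫ t in (-T)..T, ρ₂ t := by
            simp [intervalIntegral.integral_const_mul]
      · rw [intervalIntegral.integral_undef hInt]
        exact mul_nonneg hM0 hA₂0
    have hApos : (0:ℝ) < ∫ t in (-T)..T, ρ₁ t := lt_of_lt_of_le one_pos hT1
    have hinv : (0:ℝ) ≤ 1 / (2 * ∫ t in (-T)..T, ρ₁ t) := by positivity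
    calc (1 / (2 * ∫ t in (-T)..T, ρ₁ t)) * ∫ t in (-T)..T, L t * ρ₂ t
        ≤ (1 / (2 * ∫ t in (-T)..T, ρ₁ t)) * (M * ∫ t in (-T)..T, ρ₂ t) :=
          mul_le_mul_of_nonneg_left hIle hinv
      _ = (M / 2) * ((∫ t in (-T)..T, ρ₂ t) / ∫ t in (-T)..T, ρ₁ t) := by
          field_simp
  · have := hweights.const_mul (M / 2)
    simpa using this
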